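/- Let H be a real Hilbert space, let F : H → ℝ be convex and continuous, T > 0, and u₀ ∈ H. Let u, v : [0,T] → H be continuous with u(0) = u₀, and suppose there exist Bochner-integrable functions w, z : [0,T] → H such that u(t) = u₀ + ∫₀ᵗ w(s) ds and v(t) = v(0) + ∫₀ᵗ z(s) ds for all t ∈ [0,T], and that for almost every t ∈ (0,T) one has F(φ) ≥ F(u(t)) + ⟨−w(t), φ − u(t)⟩ for all φ ∈ H. Then ∫₀ᵀ ⟨z(t), v(t) − u(t)⟩ dt + ∫₀ᵀ F(v(t)) dt − ∫₀ᵀ F(u(t)) dt ≥ ½‖v(T) − u(T)‖² − ½‖v(0) − u₀‖². -/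

import Mathlib

open MeasureTheory
open scoped RealInnerProductSpace

lemma int_inner_aux {H : Type*} [NormedAddCommGroup H] [InnerProductSpace ℝ H]
    {T : ℝ} {g f : ℝ → H} (hg : IntegrableOn g (Set.Ioc 0 T))
    (hf : ContinuousOn f (Set.Icc 0 T)) :
    IntegrableOn (fun t => ⟪g t, f t⟫) (Set.Ioc 0 T) := by
  obtain ⟨M, hM⟩ := isCompact_Icc.exists_bound_of_continuousOn hf
  have hfm : AEStronglyMeasurable f (volume.restrict (Set.Ioc 0 T)) :=
    (hf.aestronglyMeasurable measurableSet_Icc).mono_measure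
      (Measure.restrict_mono Set.Ioc_subset_Icc_self le_rfl)
  refine (hg.norm.mul_const M).mono' (hg.aestronglyMeasurable.inner hfm) ?_
  filter_upwards [ae_restrict_mem measurableSet_Ioc] with t ht
  calc ‖⟪g t, f t⟫‖ ≤ ‖g t‖ * ‖f t‖ := norm_inner_le_norm _ _
    _ ≤ ‖g t‖ * M :=
      mul_le_mul_of_nonneg_left (hM t (Set.Ioc_subset_Icc_self ht)) (norm_nonneg _)

lemma key_identity {H : Type*} [NormedAddCommGroup H] [InnerProductSpace ℝ H] [CompleteSpace H]
    {T : ℝ} (hT : 0 ≤ T) (h f : ℝ → H) (c : H)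
    (hint : IntegrableOn h (Set.Ioc 0 T))
    (hfc : ContinuousOn f (Set.Icc 0 T))
    (hfe : ∀ t ∈ Set.Icc 0 T, f t = c + ∫ s in Set.Ioc 0 t, h s) :
    ∫ t in Set.Ioc 0 T, ⟪h t, f t⟫ = 1/2 * ‖f T‖^2 - 1/2 * ‖c‖^2 := by
  have hTmem : T ∈ Set.Icc (0:ℝ) T := ⟨hT, le_rfl⟩
  have hftc : ∀ t ∈ Set.Icc (0:ℝ) T, ∫ s in Set.Ioc 0 t, h s = f t - c := by
    intro t ht; rw [hfe t ht]; abel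
  have hIT : ∫ s in Set.Ioc (0:ℝ) T, h s = f T - c := hftc T hTmem
  have hsplit : ∀ t ∈ Set.Ioc (0:ℝ) T, ∫ s in Set.Ioc t T, h s = f T - f t := by
    intro t ht
    have h1 : (∫ s in Set.Ioc (0:ℝ) t, h s) + ∫ s in Set.Ioc t T, h s
        = ∫ s in Set.Ioc (0:ℝ) T, h s := by
      rw [← setIntegral_union (Set.Ioc_disjoint_Ioc_of_le le_rfl) measurableSet_Ioc
        (hint.mono_set (Set.Ioc_subset_Ioc_right ht.2))
        (hint.mono_set (Set.Ioc_subset_Ioc_left ht.1.le)),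
        Set.Ioc_union_Ioc_eq_Ioc ht.1.le ht.2]
    have h2 := hftc t ⟨ht.1.le, ht.2⟩
    rw [h2, hIT] at h1
    have : ∫ s in Set.Ioc t T, h s = (f T - c) - (f t - c) := by
      rw [← h1]; abel
    rw [this]; abel
  -- integrabilities
  have hA_int : Integrable (fun t => ⟪h t, f t - c⟫) (volume.restrict (Set.Ioc 0 T)) :=
    int_inner_aux hint (hfc.sub continuousOn_const)
  have hC_int : Integrable (fun t => ⟪h t, f T - f t⟫) (volume.restrict (Set.Ioc 0 T)) :=
    int_inner_aux hint (continuousOn_const.sub hfc)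
  set A := ∫ t in Set.Ioc (0:ℝ) T, ⟪h t, f t - c⟫ with hA
  set C := ∫ t in Set.Ioc (0:ℝ) T, ⟪h t, f T - f t⟫ with hC
  have hintS : Integrable h (volume.restrict (Set.Ioc 0 T)) := hint
  have hACsum : A + C = ‖f T - c‖^2 := by
    rw [hA, hC, ← integral_add hA_int hC_int]
    have heq : ∀ t : ℝ, ⟪h t, f t - c⟫ + ⟪h t, f T - f t⟫ = ⟪(f T - c : H), h t⟫ := by
      intro t
      rw [← inner_add_right, real_inner_comm]
      congr 1
      abel
    simp_rw [heq]
    rw [integral_inner hintS, hIT, real_inner_self_eq_norm_sq]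
  -- Fubini: A = C
  have hAC : A = C := by
    set μ := volume.restrict (Set.Ioc (0:ℝ) T) with hμ
    set G : ℝ × ℝ → ℝ := ({p : ℝ × ℝ | p.1 < p.2}).indicator (fun p => ⟪h p.1, h p.2⟫) with hG
    have hKm : AEStronglyMeasurable (fun p : ℝ × ℝ => ⟪h p.1, h p.2⟫) (μ.prod μ) :=
      AEStronglyMeasurable.inner hintS.aestronglyMeasurable.comp_fst
        hintS.aestronglyMeasurable.comp_snd
    have hGm : AEStronglyMeasurable G (μ.prod μ) :=
      hKm.indicator (measurableSet_lt measurable_fst measurable_snd)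
    have hGint : Integrable G (μ.prod μ) := by
      refine (hintS.norm.mul_prod hintS.norm).mono' hGm ?_
      filter_upwards with p
      calc ‖G p‖ ≤ ‖⟪h p.1, h p.2⟫‖ := norm_indicator_le_norm_self _ _
        _ ≤ ‖h p.1‖ * ‖h p.2‖ := norm_inner_le_norm _ _
    have hswap : (∫ t, ∫ s, G (t, s) ∂μ ∂μ) = ∫ s, ∫ t, G (t, s) ∂μ ∂μ :=
      integral_integral_swap (f := fun t s => G (t, s)) hGint
    have hL : (∫ t, ∫ s, G (t, s) ∂μ ∂μ) = C := by
      rw [hC, hμ]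
      refine setIntegral_congr_ae measurableSet_Ioc ?_
      filter_upwards with t ht
      have e1 : (fun s => G (t, s)) = (Set.Ioi t).indicator (fun s => ⟪h t, h s⟫) := by
        funext s
        simp [hG, Set.indicator_apply, Set.mem_Ioi]
      rw [e1, integral_indicator measurableSet_Ioi,
        Measure.restrict_restrict measurableSet_Ioi]
      have e2 : Set.Ioi t ∩ Set.Ioc 0 T = Set.Ioc t T := by
        ext s
        simp only [Set.mem_inter_iff, Set.mem_Ioi, Set.mem_Ioc]
        constructor
        · rintro ⟨h1, _, h3⟩; exact ⟨h1, h3⟩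
        · rintro ⟨h1, h2⟩; exact ⟨h1, ht.1.trans h1, h2⟩
      rw [e2, integral_inner (hint.mono_set (Set.Ioc_subset_Ioc_left ht.1.le)),
        hsplit t ht]
    have hR : (∫ s, ∫ t, G (t, s) ∂μ ∂μ) = A := by
      rw [hA, hμ]
      refine setIntegral_congr_ae measurableSet_Ioc ?_
      filter_upwards with s hs
      have e1 : (fun t => G (t, s)) = (Set.Iio s).indicator (fun t => ⟪h t, h s⟫) := by
        funext t
        simp [hG, Set.indicator_apply, Set.mem_Iio]
      rw [e1, integral_indicator measurableSet_Iio,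
        Measure.restrict_restrict measurableSet_Iio]
      have e2 : Set.Iio s ∩ Set.Ioc 0 T = Set.Ioo 0 s := by
        ext t
        simp only [Set.mem_inter_iff, Set.mem_Iio, Set.mem_Ioc, Set.mem_Ioo]
        constructor
        · rintro ⟨h1, h2, _⟩; exact ⟨h2, h1⟩
        · rintro ⟨h1, h2⟩; exact ⟨h2, h1, (h2.trans_le hs.2).le⟩
      rw [e2, ← integral_Ioc_eq_integral_Ioo]
      have e4 : ∀ t : ℝ, ⟪h t, h s⟫ = ⟪h s, h t⟫ := fun t => real_inner_comm _ _
      simp_rw [e4]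
      rw [integral_inner (hint.mono_set (Set.Ioc_subset_Ioc_right hs.2)),
        hftc s ⟨hs.1.le, hs.2⟩, real_inner_comm]
    rw [← hR, ← hswap, hL]
  have hAval : A = 1/2 * ‖f T - c‖^2 := by rw [hAC] at hACsum ⊢; linarith
  have hfinal : (∫ t in Set.Ioc (0:ℝ) T, ⟪h t, f t⟫)
      = (∫ t in Set.Ioc (0:ℝ) T, ⟪h t, c⟫) + A := by
    rw [hA, ← integral_add (hintS.inner_const c) hA_int]
    refine integral_congr_ae ?_
    filter_upwards with t
    rw [← inner_add_right]
    congr 1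
    abel
  have hic : (∫ t in Set.Ioc (0:ℝ) T, ⟪h t, c⟫) = ⟪c, f T - c⟫ := by
    have e5 : ∀ t : ℝ, ⟪h t, c⟫ = ⟪c, h t⟫ := fun t => real_inner_comm _ _
    simp_rw [e5]
    rw [integral_inner hintS, hIT]
  rw [hfinal, hic, hAval]
  have expand := @norm_sub_sq_real H _ _ (f T) c
  have e3 : ⟪c, f T - c⟫ = ⟪f T, c⟫ - ‖c‖^2 := by
    rw [inner_sub_right, real_inner_self_eq_norm_sq, real_inner_comm]
  rw [e3, expand]
  ring

/-- Every weak solution of the gradient flow `-u' ∈ ∂F(u)` of a convex continuous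
functional `F` on a real Hilbert space is a variational solution in the sense of
Lichnewsky–Temam. -/
theorem stmt_3 {H : Type*} [NormedAddCommGroup H] [InnerProductSpace ℝ H] [CompleteSpace H]
    (F : H → ℝ) (hFconv : ConvexOn ℝ Set.univ F) (hFcont : Continuous F)
    (T : ℝ) (hT : 0 < T) (u₀ : H)
    (u v w z : ℝ → H)
    (hucont : ContinuousOn u (Set.Icc 0 T))
    (hvcont : ContinuousOn v (Set.Icc 0 T))
    (hu0 : u 0 = u₀)
    (hwint : IntervalIntegrable w volume 0 T)
    (hzint : IntervalIntegrable z volume 0 T)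
    (hu : ∀ t ∈ Set.Icc (0 : ℝ) T, u t = u₀ + ∫ s in (0 : ℝ)..t, w s)
    (hv : ∀ t ∈ Set.Icc (0 : ℝ) T, v t = v 0 + ∫ s in (0 : ℝ)..t, z s)
    (hsub : ∀ᵐ t ∂(volume.restrict (Set.Ioo (0 : ℝ) T)),
      ∀ φ : H, F (u t) + ⟪-(w t), φ - u t⟫ ≤ F φ) :
    (1 : ℝ) / 2 * ‖v T - u T‖ ^ 2 - 1 / 2 * ‖v 0 - u₀‖ ^ 2 ≤
      (∫ t in (0 : ℝ)..T, ⟪z t, v t - u t⟫) + (∫ t in (0 : ℝ)..T, F (v t))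
        - ∫ t in (0 : ℝ)..T, F (u t) := by
  have hT' : (0:ℝ) ≤ T := hT.le
  have hfcont : ContinuousOn (fun t => v t - u t) (Set.Icc 0 T) := hvcont.sub hucont
  have hhS : IntegrableOn (fun t => z t - w t) (Set.Ioc 0 T) := hzint.1.sub hwint.1
  have hfe : ∀ t ∈ Set.Icc (0:ℝ) T,
      (fun t => v t - u t) t = (v 0 - u₀) + ∫ s in Set.Ioc 0 t, (z s - w s) := by
    intro t ht
    have hzt : IntervalIntegrable z volume 0 t := hzint.mono_set
      (by rw [Set.uIcc_of_le ht.1, Set.uIcc_of_le hT']; exact Set.Icc_subset_Icc le_rfl ht.2)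
    have hwt : IntervalIntegrable w volume 0 t := hwint.mono_set
      (by rw [Set.uIcc_of_le ht.1, Set.uIcc_of_le hT']; exact Set.Icc_subset_Icc le_rfl ht.2)
    simp only
    rw [hu t ht, hv t ht, ← intervalIntegral.integral_of_le ht.1,
      intervalIntegral.integral_sub hzt hwt]
    abel
  have key := key_identity hT' (fun t => z t - w t) (fun t => v t - u t) (v 0 - u₀)
    hhS hfcont hfe
  -- integrabilities over Ioc 0 T
  have hzf : IntegrableOn (fun t => ⟪z t, v t - u t⟫) (Set.Ioc 0 T) :=
    int_inner_aux hzint.1 hfcont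
  have hwf : IntegrableOn (fun t => ⟪w t, v t - u t⟫) (Set.Ioc 0 T) :=
    int_inner_aux hwint.1 hfcont
  have hFv : IntegrableOn (fun t => F (v t)) (Set.Ioc 0 T) :=
    ((hFcont.comp_continuousOn hvcont).integrableOn_Icc).mono_set Set.Ioc_subset_Icc_self
  have hFu : IntegrableOn (fun t => F (u t)) (Set.Ioc 0 T) :=
    ((hFcont.comp_continuousOn hucont).integrableOn_Icc).mono_set Set.Ioc_subset_Icc_self
  -- a.e. inequality on Ioc
  rw [Measure.restrict_congr_set Ioo_ae_eq_Ioc] at hsub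
  have h_ae : ∀ᵐ t ∂(volume.restrict (Set.Ioc (0:ℝ) T)),
      -⟪w t, v t - u t⟫ ≤ F (v t) - F (u t) := by
    filter_upwards [hsub] with t ht
    have := ht (v t)
    have hn : ⟪-(w t), v t - u t⟫ = -⟪w t, v t - u t⟫ := by
      rw [inner_neg_left]
    linarith [hn ▸ this]
  have h_mono : ∫ t in Set.Ioc (0:ℝ) T, (-⟪w t, v t - u t⟫)
      ≤ ∫ t in Set.Ioc (0:ℝ) T, (F (v t) - F (u t)) :=
    integral_mono_ae hwf.neg (hFv.sub hFu) h_ae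
  rw [integral_neg, integral_sub hFv hFu] at h_mono
  have hsum : (∫ t in Set.Ioc (0:ℝ) T, ⟪z t - w t, v t - u t⟫)
      = (∫ t in Set.Ioc (0:ℝ) T, ⟪z t, v t - u t⟫)
        - ∫ t in Set.Ioc (0:ℝ) T, ⟪w t, v t - u t⟫ := by
    rw [← integral_sub hzf hwf]
    refine integral_congr_ae ?_
    filter_upwards with t
    rw [inner_sub_left]
  rw [hsum] at key
  rw [intervalIntegral.integral_of_le hT', intervalIntegral.integral_of_le hT',
    intervalIntegral.integral_of_le hT']
  linarith
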